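/- arXiv:math/9906214 — 4 statements merged into one kernel-verified Lean document; each statement's English description precedes it below -/
import Mathlib

section
/- For an odd prime p, every nonzero complex zero of the Fekete polynomial f_p lies in the annulus 1/2 < |t| < 2. -/
/-- For an odd prime `p`, every nonzero complex zero of the Fekete polynomial
lies in the annulus `1/2 < |t| < 2`. -/
theorem fekete_zeros_in_annulus (p : ℕ) [Fact p.Prime] (hp : p ≠ 2) (t : ℂ) (ht : t ≠ 0)
    (hz : (∑ a ∈ Finset.range p, (legendreSym p (a : ℤ) : ℂ) * t ^ a) = 0) :
    1 / 2 < ‖t‖ ∧ ‖t‖ < 2 := by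
  have hpp := (Fact.out : p.Prime)
  have hp3 : 3 ≤ p := lt_of_le_of_ne hpp.two_le (Ne.symm hp)
  set r := ‖t‖ with hrdef
  have hr0 : 0 < r := norm_pos_iff.mpr ht
  -- coefficient bound
  have habs : ∀ a : ℕ, ‖(legendreSym p (a : ℤ) : ℂ)‖ ≤ 1 := by
    intro a
    by_cases h : ((a : ℤ) : ZMod p) = 0
    · rw [(legendreSym.eq_zero_iff p _).mpr h]; simp
    · rcases legendreSym.eq_one_or_neg_one p h with h1 | h1 <;> rw [h1] <;> simp
  constructor
  · -- lower bound
    by_contra hle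
    push_neg at hle
    have h01 : (∑ a ∈ Finset.range 2, (legendreSym p (a : ℤ) : ℂ) * t ^ a) = t := by
      rw [Finset.sum_range_succ, Finset.sum_range_one]
      norm_num [legendreSym.at_zero, legendreSym.at_one]
    have hsplit : (∑ a ∈ Finset.range 2, (legendreSym p (a : ℤ) : ℂ) * t ^ a)
        + ∑ a ∈ Finset.Ico 2 p, (legendreSym p (a : ℤ) : ℂ) * t ^ a = 0 := by
      rw [← hz, Finset.range_eq_Ico, Finset.range_eq_Ico]
      exact Finset.sum_Ico_consecutive _ (by omega) (by omega)
    have htail : (∑ a ∈ Finset.Ico 2 p, (legendreSym p (a : ℤ) : ℂ) * t ^ a) = -t := by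
      rw [h01] at hsplit; linear_combination hsplit
    have hbound : r ≤ ∑ a ∈ Finset.Ico 2 p, r ^ a := by
      calc r = ‖-t‖ := by simp [hrdef]
        _ = ‖∑ a ∈ Finset.Ico 2 p, (legendreSym p (a : ℤ) : ℂ) * t ^ a‖ := by
            rw [htail]
        _ ≤ ∑ a ∈ Finset.Ico 2 p, ‖(legendreSym p (a : ℤ) : ℂ) * t ^ a‖ :=
            norm_sum_le _ _
        _ ≤ ∑ a ∈ Finset.Ico 2 p, r ^ a := by
            apply Finset.sum_le_sum
            intro a _
            rw [norm_mul, norm_pow]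
            exact mul_le_of_le_one_left (by positivity) (habs a)
    have hgeom : (∑ a ∈ Finset.Ico 2 p, r ^ a) = r ^ 2 * ∑ i ∈ Finset.range (p - 2), r ^ i := by
      rw [Finset.sum_Ico_eq_sum_range, Finset.mul_sum]
      exact Finset.sum_congr rfl fun i _ => by rw [pow_add]
    have hsmall : (∑ i ∈ Finset.range (p - 2), r ^ i) < 2 := by
      have hr1 : r ≠ 1 := by intro h; rw [h] at hle; norm_num at hle
      rw [geom_sum_eq hr1]
      rw [div_lt_iff_of_neg (by linarith : r - 1 < 0)]
      have := pow_pos hr0 (p - 2)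
      linarith
    rw [hgeom] at hbound
    nlinarith [mul_lt_mul_of_pos_left hsmall (by positivity : (0:ℝ) < r ^ 2),
      mul_le_mul_of_nonneg_left hle hr0.le]
  · -- upper bound
    by_contra hge
    push_neg at hge
    obtain ⟨q, hq⟩ : ∃ q, p = q + 1 := ⟨p - 1, by omega⟩
    have hq2 : 2 ≤ q := by omega
    have hz' : (legendreSym p (q : ℤ) : ℂ) * t ^ q
        = -∑ a ∈ Finset.range q, (legendreSym p (a : ℤ) : ℂ) * t ^ a := by
      have hrange : Finset.range p = Finset.range (q + 1) := by rw [hq]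
      rw [hrange, Finset.sum_range_succ] at hz
      linear_combination hz
    have hcq : ‖(legendreSym p (q : ℤ) : ℂ)‖ = 1 := by
      have hnz : ((q : ℤ) : ZMod p) ≠ 0 := by
        rw [Int.cast_natCast, Ne, ZMod.natCast_eq_zero_iff]
        intro hdvd
        have := Nat.le_of_dvd (by omega) hdvd
        omega
      rcases legendreSym.eq_one_or_neg_one p hnz with h1 | h1 <;> rw [h1] <;> simp
    have hbound : r ^ q ≤ ∑ a ∈ Finset.range q, r ^ a := by
      calc r ^ q = ‖(legendreSym p (q : ℤ) : ℂ) * t ^ q‖ := by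
            rw [norm_mul, norm_pow, hcq, one_mul]
        _ = ‖∑ a ∈ Finset.range q, (legendreSym p (a : ℤ) : ℂ) * t ^ a‖ := by
            rw [hz', norm_neg]
        _ ≤ ∑ a ∈ Finset.range q, ‖(legendreSym p (a : ℤ) : ℂ) * t ^ a‖ :=
            norm_sum_le _ _
        _ ≤ ∑ a ∈ Finset.range q, r ^ a := by
            apply Finset.sum_le_sum
            intro a _
            rw [norm_mul, norm_pow]
            exact mul_le_of_le_one_left (by positivity) (habs a)
    have hr1 : r ≠ 1 := by intro h; rw [h] at hge; norm_num at hge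
    rw [geom_sum_eq hr1] at hbound
    have hgd : (r ^ q - 1) / (r - 1) ≤ r ^ q - 1 := by
      apply div_le_self
      · have : (1:ℝ) ≤ r ^ q := one_le_pow₀ (by linarith)
        linarith
      · linarith
    linarith
end

section
/- For every integer p ≥ 2, Σ_{k=1}^{p-1} 1/sin²(πk/p) = (p² - 1)/3. -/
open Finset Complex

private lemma aux_sum_j_mul (x : ℂ) (n : ℕ) :
    (∑ j ∈ range n, (j : ℂ) * x ^ j) * (x - 1) ^ 2 =
      (((n : ℂ) - 1) * x - n) * x ^ n + x := by
  induction n with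
  | zero => simp only [range_zero, sum_empty, Nat.cast_zero, zero_mul]; ring
  | succ n ih =>
    rw [sum_range_succ, add_mul, ih]
    push_cast
    ring

private lemma aux_sum_j_sq_mul (x : ℂ) (n : ℕ) :
    (∑ j ∈ range n, (j : ℂ) ^ 2 * x ^ j) * (x - 1) ^ 3 =
      x ^ n * (((n : ℂ) - 1) ^ 2 * x ^ 2 - (2 * (n : ℂ) ^ 2 - 2 * n - 1) * x + (n : ℂ) ^ 2)
        - x * (x + 1) := by
  induction n with
  | zero => simp only [range_zero, sum_empty, Nat.cast_zero, zero_mul]; ring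
  | succ n ih =>
    rw [sum_range_succ, add_mul, ih]
    push_cast
    ring

private lemma aux_key (p : ℕ) (hp : 2 ≤ p) (ζ : ℂ) (hζp : ζ ^ p = 1) (hζ1 : ζ ≠ 1) :
    (∑ j ∈ Finset.Ico 1 p, (j : ℂ) * ((p : ℂ) - j) * ζ ^ j) = 2 * p * ζ / (ζ - 1) ^ 2 := by
  have h1 : ζ - 1 ≠ 0 := sub_ne_zero.mpr hζ1
  rw [eq_div_iff (pow_ne_zero 2 h1)]
  have hrange : (∑ j ∈ Finset.Ico 1 p, (j : ℂ) * ((p : ℂ) - j) * ζ ^ j)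
      = ∑ j ∈ range p, (j : ℂ) * ((p : ℂ) - j) * ζ ^ j := by
    rw [range_eq_Ico, Finset.sum_eq_sum_Ico_succ_bot (by omega : 0 < p)]
    simp
  rw [hrange]
  have hsplit : (∑ j ∈ range p, (j : ℂ) * ((p : ℂ) - j) * ζ ^ j)
      = (p : ℂ) * (∑ j ∈ range p, (j : ℂ) * ζ ^ j) - ∑ j ∈ range p, (j : ℂ) ^ 2 * ζ ^ j := by
    rw [Finset.mul_sum, ← Finset.sum_sub_distrib]
    exact Finset.sum_congr rfl fun j _ => by ring
  have hA := aux_sum_j_mul ζ p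
  have hB := aux_sum_j_sq_mul ζ p
  rw [hζp] at hA hB
  apply mul_right_cancel₀ h1
  rw [hsplit]
  linear_combination (p : ℂ) * (ζ - 1) * hA - hB

private lemma aux_geom (p : ℕ) (hp : 2 ≤ p) (y : ℂ) (hyp : y ^ p = 1) (hy1 : y ≠ 1) :
    (∑ k ∈ Finset.Ico 1 p, y ^ k) = -1 := by
  have h0 : (∑ k ∈ range p, y ^ k) = 0 := by
    rw [geom_sum_eq hy1, hyp]; simp
  have h1 : (∑ k ∈ range p, y ^ k) = y ^ 0 + ∑ k ∈ Finset.Ico 1 p, y ^ k := by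
    rw [range_eq_Ico, Finset.sum_eq_sum_Ico_succ_bot (by omega : 0 < p)]
  rw [h1] at h0
  linear_combination h0

private lemma aux_sum_id (n : ℕ) : (∑ j ∈ range n, (j : ℂ)) = n * ((n : ℂ) - 1) / 2 := by
  induction n with
  | zero => simp
  | succ n ih => rw [sum_range_succ, ih]; push_cast; ring

private lemma aux_sum_sq (n : ℕ) :
    (∑ j ∈ range n, (j : ℂ) ^ 2) = n * ((n : ℂ) - 1) * (2 * n - 1) / 6 := by
  induction n with
  | zero => simp
  | succ n ih => rw [sum_range_succ, ih]; push_cast; ring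

private lemma aux_sum_c (p : ℕ) (hp : 2 ≤ p) :
    (∑ j ∈ Finset.Ico 1 p, (j : ℂ) * ((p : ℂ) - j)) = p * ((p : ℂ) ^ 2 - 1) / 6 := by
  have h : (∑ j ∈ Finset.Ico 1 p, (j : ℂ) * ((p : ℂ) - j))
      = ∑ j ∈ range p, (j : ℂ) * ((p : ℂ) - j) := by
    rw [range_eq_Ico, Finset.sum_eq_sum_Ico_succ_bot (by omega : 0 < p)]
    simp
  have h2 : (∑ j ∈ range p, (j : ℂ) * ((p : ℂ) - j))
      = (p : ℂ) * (∑ j ∈ range p, (j : ℂ)) - ∑ j ∈ range p, (j : ℂ) ^ 2 := by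
    rw [Finset.mul_sum, ← Finset.sum_sub_distrib]
    exact Finset.sum_congr rfl fun j _ => by ring
  rw [h, h2, aux_sum_id, aux_sum_sq]
  ring

private lemma aux_sin_sq (z : ℂ) :
    Complex.sin z ^ 2 * (4 * Complex.exp (2 * z * Complex.I)) =
      -(Complex.exp (2 * z * Complex.I) - 1) ^ 2 := by
  rw [Complex.sin, neg_mul, Complex.exp_neg,
    show (2 : ℂ) * z * Complex.I = z * Complex.I + z * Complex.I by ring, Complex.exp_add]
  have he : Complex.exp (z * Complex.I) ≠ 0 := Complex.exp_ne_zero _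
  field_simp
  ring_nf
  rw [Complex.I_sq]
  ring

/-- For every integer `p ≥ 2`, `Σ_{k=1}^{p-1} 1 / sin²(πk/p) = (p² - 1)/3`. -/
theorem sum_inv_sin_sq (p : ℕ) (hp : 2 ≤ p) :
    (∑ k ∈ Finset.Ico 1 p, 1 / Real.sin (Real.pi * k / p) ^ 2) = ((p : ℝ) ^ 2 - 1) / 3 := by
  have hp0 : (p : ℂ) ≠ 0 := Nat.cast_ne_zero.mpr (by omega)
  set ω : ℂ := Complex.exp (2 * Real.pi * Complex.I / p) with hω
  have hπ : (Real.pi : ℂ) ≠ 0 := by exact_mod_cast Real.pi_ne_zero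
  have hI : Complex.I ≠ 0 := Complex.I_ne_zero
  have hωp : ω ^ p = 1 := by
    rw [hω, ← Complex.exp_nat_mul,
      show (p : ℂ) * (2 * Real.pi * Complex.I / p) = 2 * Real.pi * Complex.I by field_simp,
      Complex.exp_two_pi_mul_I]
  have hne : ∀ m : ℕ, 0 < m → m < p → ω ^ m ≠ 1 := by
    intro m hm1 hm2 h
    rw [hω, ← Complex.exp_nat_mul, Complex.exp_eq_one_iff] at h
    obtain ⟨n, hn⟩ := h
    have hmn : (m : ℂ) = n * p := by
      have h2 : (2 : ℂ) * Real.pi * Complex.I ≠ 0 := by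
        simp [hπ, hI]
      field_simp [hp0] at hn
      apply mul_right_cancel₀ h2
      linear_combination (2 * (Real.pi : ℂ) * Complex.I) * hn
    have hmn' : (m : ℤ) = n * p := by exact_mod_cast hmn
    rcases le_or_gt n 0 with h | h
    · nlinarith [hmn', (by exact_mod_cast hm1 : (0:ℤ) < m), (by exact_mod_cast hm2 : (m:ℤ) < p)]
    · nlinarith [hmn', (by exact_mod_cast hm1 : (0:ℤ) < m), (by exact_mod_cast hm2 : (m:ℤ) < p)]
  have key2 : ∀ k ∈ Finset.Ico 1 p,
      (1 / Complex.sin ((Real.pi : ℂ) * k / p) ^ 2) =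
        (-2 / (p : ℂ)) * ∑ j ∈ Finset.Ico 1 p, (j : ℂ) * ((p : ℂ) - j) * (ω ^ j) ^ k := by
    intro k hk
    rw [Finset.mem_Ico] at hk
    set ζ : ℂ := ω ^ k with hζdef
    have hζ1 : ζ ≠ 1 := hne k hk.1 hk.2
    have hζp : ζ ^ p = 1 := by
      rw [hζdef, ← pow_mul, mul_comm, pow_mul, hωp, one_pow]
    have hζ0 : ζ ≠ 0 := by
      rw [hζdef, hω, ← Complex.exp_nat_mul]; exact Complex.exp_ne_zero _
    have hζexp : Complex.exp (2 * ((Real.pi : ℂ) * k / p) * Complex.I) = ζ := by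
      rw [hζdef, hω, ← Complex.exp_nat_mul]
      congr 1
      ring
    have hsin := aux_sin_sq ((Real.pi : ℂ) * k / p)
    rw [hζexp] at hsin
    have h1 : ζ - 1 ≠ 0 := sub_ne_zero.mpr hζ1
    have hs0 : Complex.sin ((Real.pi : ℂ) * k / p) ^ 2 ≠ 0 := by
      intro h
      rw [h, zero_mul] at hsin
      exact pow_ne_zero 2 h1 (by linear_combination hsin)
    have hsum : (∑ j ∈ Finset.Ico 1 p, (j : ℂ) * ((p : ℂ) - j) * (ω ^ j) ^ k)
        = 2 * p * ζ / (ζ - 1) ^ 2 := by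
      rw [← aux_key p hp ζ hζp hζ1]
      exact Finset.sum_congr rfl fun j _ => by rw [pow_right_comm]
    have hs : Complex.sin ((Real.pi : ℂ) * k / p) ^ 2 = -(ζ - 1) ^ 2 / (4 * ζ) := by
      field_simp
      linear_combination hsin
    rw [hsum, hs]
    rw [div_mul_div_comm]
    rw [one_div_div]
    field_simp
    ring
  have main : (∑ k ∈ Finset.Ico 1 p, (1 / Complex.sin ((Real.pi : ℂ) * k / p) ^ 2))
      = ((p : ℂ) ^ 2 - 1) / 3 := by
    rw [Finset.sum_congr rfl key2, ← Finset.mul_sum, Finset.sum_comm]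
    have hj : ∀ j ∈ Finset.Ico 1 p,
        (∑ k ∈ Finset.Ico 1 p, (j : ℂ) * ((p : ℂ) - j) * (ω ^ j) ^ k)
          = -((j : ℂ) * ((p : ℂ) - j)) := by
      intro j hj
      rw [Finset.mem_Ico] at hj
      rw [← Finset.mul_sum, aux_geom p hp (ω ^ j)
        (by rw [← pow_mul, mul_comm, pow_mul, hωp, one_pow]) (hne j hj.1 hj.2)]
      ring
    rw [Finset.sum_congr rfl hj, Finset.sum_neg_distrib, aux_sum_c p hp]
    field_simp
    ring
  have cast1 : ((∑ k ∈ Finset.Ico 1 p, 1 / Real.sin (Real.pi * k / p) ^ 2 : ℝ) : ℂ)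
      = ∑ k ∈ Finset.Ico 1 p, 1 / Complex.sin ((Real.pi : ℂ) * k / p) ^ 2 := by
    push_cast
    rfl
  have := cast1.trans main
  exact_mod_cast this
end

section
/- Let J ≥ 2 and g(x) = 1/x + 1/(1-x) + Σ_{|j|<J, j≠0,-1} δ_j/(x+j) with each δ_j ∈ {-1,1}. Then for every x ∈ (0,1), g''(x) > 0; in particular g is strictly convex on (0,1). -/
private lemma hda1 (c x : ℝ) (h : x ≠ 0) :
    HasDerivAt (fun y : ℝ => c / y) (-c / x ^ 2) x := by
  have := (hasDerivAt_const x c).fun_div (hasDerivAt_id x) h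
  refine this.congr_deriv ?_
  field_simp
  simp only [id]
  field_simp
  ring

private lemma hda2 (c x : ℝ) (h : x ≠ 0) :
    HasDerivAt (fun y : ℝ => c / y ^ 2) (-2 * c / x ^ 3) x := by
  have hp : HasDerivAt (fun y : ℝ => y ^ 2) (2 * x) x := by
    simpa using (hasDerivAt_id x).fun_pow 2
  have := (hasDerivAt_const x c).fun_div hp (pow_ne_zero 2 h)
  refine this.congr_deriv ?_
  field_simp
  ring

private lemma hda3 (c x : ℝ) (h : (1:ℝ) - x ≠ 0) :
    HasDerivAt (fun y : ℝ => c / (1 - y)) (c / (1 - x) ^ 2) x := by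
  have h1 : HasDerivAt (fun y : ℝ => 1 - y) (-1) x := (hasDerivAt_id x).const_sub 1
  have := (hasDerivAt_const x c).fun_div h1 h
  refine this.congr_deriv ?_
  field_simp
  ring

private lemma hda4 (c x : ℝ) (h : (1:ℝ) - x ≠ 0) :
    HasDerivAt (fun y : ℝ => c / (1 - y) ^ 2) (2 * c / (1 - x) ^ 3) x := by
  have h1 : HasDerivAt (fun y : ℝ => 1 - y) (-1) x := (hasDerivAt_id x).const_sub 1
  have hp : HasDerivAt (fun y : ℝ => (1 - y) ^ 2) (2 * (1 - x) * (-1)) x := by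
    simpa using h1.fun_pow 2
  have := (hasDerivAt_const x c).fun_div hp (pow_ne_zero 2 h)
  refine this.congr_deriv ?_
  field_simp
  ring

private lemma hda5 (c a x : ℝ) (h : x + a ≠ 0) :
    HasDerivAt (fun y : ℝ => c / (y + a)) (-c / (x + a) ^ 2) x := by
  have h1 : HasDerivAt (fun y : ℝ => y + a) 1 x := (hasDerivAt_id x).add_const a
  have := (hasDerivAt_const x c).fun_div h1 h
  refine this.congr_deriv ?_
  field_simp
  ring

private lemma hda6 (c a x : ℝ) (h : x + a ≠ 0) :
    HasDerivAt (fun y : ℝ => c / (y + a) ^ 2) (-2 * c / (x + a) ^ 3) x := by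
  have h1 : HasDerivAt (fun y : ℝ => y + a) 1 x := (hasDerivAt_id x).add_const a
  have hp : HasDerivAt (fun y : ℝ => (y + a) ^ 2) (2 * (x + a) * 1) x := by
    simpa using h1.fun_pow 2
  have := (hasDerivAt_const x c).fun_div hp (pow_ne_zero 2 h)
  refine this.congr_deriv ?_
  field_simp
  ring

private lemma sum_sq_aux : ∀ n : ℕ, ∑ j ∈ Finset.Ioo (0:ℤ) ((n:ℤ)+1), (1:ℝ)/(j:ℝ)^2 ≤ 2 - 1/(n:ℝ) := by
  intro n
  induction n with
  | zero =>
    have h : Finset.Ioo (0:ℤ) 1 = ∅ := by ext j; simp; omega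
    norm_num [h]
  | succ n ih =>
    have h : Finset.Ioo (0:ℤ) ((n:ℤ)+1+1) = insert ((n:ℤ)+1) (Finset.Ioo (0:ℤ) ((n:ℤ)+1)) := by
      ext j; simp [Finset.mem_Ioo]
    push_cast
    rw [h, Finset.sum_insert (by simp)]
    rcases Nat.eq_zero_or_pos n with hn | hn
    · subst hn
      have h2 : Finset.Ioo (0:ℤ) 1 = ∅ := by ext j; simp; omega
      norm_num [h2]
    · have hn1 : (1:ℝ) ≤ n := by exact_mod_cast hn
      have h0 : (0:ℝ) < n := by linarith
      have key : (1:ℝ)/((n:ℝ)+1)^2 ≤ 1/(n:ℝ) - 1/((n:ℝ)+1) := by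
        rw [div_sub_div _ _ (ne_of_gt h0) (by positivity),
          div_le_div_iff₀ (by positivity) (by positivity)]
        ring_nf
        nlinarith
      push_cast at ih
      push_cast
      linarith

private lemma sum_sq_le (m : ℤ) : ∑ j ∈ Finset.Ioo (0:ℤ) m, (1:ℝ)/(j:ℝ)^2 ≤ 2 := by
  rcases le_or_gt m 1 with h | h
  · have : Finset.Ioo (0:ℤ) m = ∅ := by ext j; simp; omega
    simp [this]
  · obtain ⟨n, rfl⟩ : ∃ n : ℕ, m = (n:ℤ)+1 := ⟨(m-1).toNat, by omega⟩
    have := sum_sq_aux n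
    have h1 : (0:ℝ) ≤ 1/(n:ℝ) := by positivity
    linarith

/-- Let `J ≥ 2` and `g(x) = 1/x + 1/(1-x) + Σ_{|j|<J, j≠0,-1} δ_j/(x+j)` with each
`δ_j ∈ {±1}`. Then `g'' > 0` on `(0,1)`; in particular `g` is strictly convex there. -/
theorem random_rational_fn_convex (J : ℕ) (hJ : 2 ≤ J) (δ : ℤ → ℝ)
    (hδ : ∀ j : ℤ, δ j = 1 ∨ δ j = -1) :
    (∀ x ∈ Set.Ioo (0 : ℝ) 1,
      0 < iteratedDeriv 2 (fun x : ℝ => 1 / x + 1 / (1 - x) +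
        ∑ j ∈ (Finset.Ioo (-(J : ℤ)) J).filter (fun j => j ≠ 0 ∧ j ≠ -1),
          δ j / (x + j)) x) ∧
    StrictConvexOn ℝ (Set.Ioo (0 : ℝ) 1) (fun x : ℝ => 1 / x + 1 / (1 - x) +
        ∑ j ∈ (Finset.Ioo (-(J : ℤ)) J).filter (fun j => j ≠ 0 ∧ j ≠ -1),
          δ j / (x + j)) := by
  set S := (Finset.Ioo (-(J : ℤ)) J).filter (fun j => j ≠ 0 ∧ j ≠ -1) with hSdef
  set F : ℝ → ℝ := fun x : ℝ => 1 / x + 1 / (1 - x) + ∑ j ∈ S, δ j / (x + j) with hFdef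
  set F1 : ℝ → ℝ := fun y : ℝ => -1 / y ^ 2 + 1 / (1 - y) ^ 2 +
    ∑ j ∈ S, -δ j / (y + (j:ℝ)) ^ 2 with hF1def
  set F2 : ℝ → ℝ := fun y : ℝ => 2 / y ^ 3 + 2 / (1 - y) ^ 3 +
    ∑ j ∈ S, 2 * δ j / (y + (j:ℝ)) ^ 3 with hF2def
  have hSmem : ∀ j ∈ S, 1 ≤ j ∨ j ≤ -2 := by
    intro j hj
    simp only [hSdef, Finset.mem_filter, Finset.mem_Ioo] at hj
    omega
  have hne : ∀ x ∈ Set.Ioo (0:ℝ) 1, ∀ j ∈ S, x + (j:ℝ) ≠ 0 := by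
    intro x hx j hj
    obtain ⟨hx0, hx1⟩ := hx
    rcases hSmem j hj with h | h
    · have h' : (1:ℝ) ≤ (j:ℝ) := by exact_mod_cast h
      have : 0 < x + (j:ℝ) := by linarith
      exact ne_of_gt this
    · have h' : (j:ℝ) ≤ -2 := by exact_mod_cast h
      have : x + (j:ℝ) < 0 := by linarith
      exact ne_of_lt this
  have hd1 : ∀ x ∈ Set.Ioo (0:ℝ) 1, HasDerivAt F (F1 x) x := by
    intro x hx
    obtain ⟨hx0, hx1⟩ := hx
    have h0 : x ≠ 0 := ne_of_gt hx0
    have h1 : (1:ℝ) - x ≠ 0 := ne_of_gt (by linarith)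
    have hsum : HasDerivAt (fun y : ℝ => ∑ j ∈ S, δ j / (y + (j:ℝ)))
        (∑ j ∈ S, -δ j / (x + (j:ℝ)) ^ 2) x :=
      HasDerivAt.fun_sum (fun j hj => hda5 (δ j) (j:ℝ) x (hne x ⟨hx0, hx1⟩ j hj))
    exact ((hda1 1 x h0).add (hda3 1 x h1)).add hsum
  have hd2 : ∀ x ∈ Set.Ioo (0:ℝ) 1, HasDerivAt F1 (F2 x) x := by
    intro x hx
    obtain ⟨hx0, hx1⟩ := hx
    have h0 : x ≠ 0 := ne_of_gt hx0
    have h1 : (1:ℝ) - x ≠ 0 := ne_of_gt (by linarith)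
    have hsum : HasDerivAt (fun y : ℝ => ∑ j ∈ S, -δ j / (y + (j:ℝ)) ^ 2)
        (∑ j ∈ S, 2 * δ j / (x + (j:ℝ)) ^ 3) x := by
      have h := HasDerivAt.fun_sum (fun j hj => hda6 (-δ j) (j:ℝ) x (hne x ⟨hx0, hx1⟩ j hj))
      refine h.congr_deriv ?_
      exact Finset.sum_congr rfl (fun j hj => by ring)
    have h2a : HasDerivAt (fun y : ℝ => -1 / y ^ 2) (2 / x ^ 3) x := by
      have := hda2 (-1) x h0
      convert this using 1
      ring
    have h2b : HasDerivAt (fun y : ℝ => 1 / (1 - y) ^ 2) (2 / (1 - x) ^ 3) x := by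
      have := hda4 1 x h1
      convert this using 1
      ring
    exact (h2a.add h2b).add hsum
  have hF2eq : ∀ x ∈ Set.Ioo (0:ℝ) 1, iteratedDeriv 2 F x = F2 x := by
    intro x hx
    have hder : Set.EqOn (deriv F) F1 (Set.Ioo 0 1) := fun y hy => (hd1 y hy).deriv
    rw [show (2:ℕ) = 1 + 1 from rfl, iteratedDeriv_succ, iteratedDeriv_one]
    have hev : deriv F =ᶠ[nhds x] F1 :=
      Filter.eventuallyEq_of_mem (isOpen_Ioo.mem_nhds hx) hder
    rw [hev.deriv_eq]
    exact (hd2 x hx).deriv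
  have hpos : ∀ x ∈ Set.Ioo (0:ℝ) 1, 0 < F2 x := by
    intro x hx
    obtain ⟨hx0, hx1⟩ := hx
    have hSsplit : S = Finset.Ioo (-(J:ℤ)) (-1) ∪ Finset.Ioo 0 (J:ℤ) := by
      ext j
      simp only [hSdef, Finset.mem_filter, Finset.mem_Ioo, Finset.mem_union]
      omega
    have hdisj : Disjoint (Finset.Ioo (-(J:ℤ)) (-1)) (Finset.Ioo (0:ℤ) (J:ℤ)) := by
      rw [Finset.disjoint_left]
      intro j hj hj'
      simp only [Finset.mem_Ioo] at hj hj'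
      omega
    -- positive part bound
    have hpos_bound : -(2 * ∑ j ∈ Finset.Ioo (0:ℤ) (J:ℤ), (1:ℝ)/(j:ℝ)^2) ≤
        ∑ j ∈ Finset.Ioo (0:ℤ) (J:ℤ), 2 * δ j / (x + (j:ℝ)) ^ 3 := by
      rw [Finset.mul_sum, ← Finset.sum_neg_distrib]
      apply Finset.sum_le_sum
      intro j hj
      simp only [Finset.mem_Ioo] at hj
      have hj1 : (1:ℝ) ≤ (j:ℝ) := by exact_mod_cast hj.1
      have hxj : (0:ℝ) < x + (j:ℝ) := by linarith
      have he1 : (j:ℝ)^3 ≤ (x + (j:ℝ))^3 := pow_le_pow_left₀ (by linarith) (by linarith) 3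
      have he2 : (j:ℝ)^2 ≤ (j:ℝ)^3 := by
        nlinarith [mul_nonneg (sq_nonneg (j:ℝ)) (by linarith : (0:ℝ) ≤ (j:ℝ) - 1)]
      have hle : (j:ℝ)^2 ≤ (x + (j:ℝ))^3 := le_trans he2 he1
      have hp2 : (0:ℝ) < (j:ℝ)^2 := by positivity
      rcases hδ j with hd | hd
      · rw [hd]
        have : (0:ℝ) < 2 * 1 / (x + (j:ℝ))^3 := by positivity
        have h2 : (0:ℝ) ≤ 2 * (1/(j:ℝ)^2) := by positivity
        linarith
      · rw [hd]
        have key : 2 / (x + (j:ℝ))^3 ≤ 2 / (j:ℝ)^2 := by gcongr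
        have : 2 * (-1) / (x + (j:ℝ))^3 = -(2 / (x + (j:ℝ))^3) := by ring
        rw [this]
        have h2 : 2 * ((1:ℝ)/(j:ℝ)^2) = 2 / (j:ℝ)^2 := by ring
        rw [h2]
        linarith
    -- negative part bound
    have hneg_bound : -(2 * ∑ k ∈ Finset.Ioo (0:ℤ) ((J:ℤ)-1), (1:ℝ)/(k:ℝ)^2) ≤
        ∑ j ∈ Finset.Ioo (-(J:ℤ)) (-1), 2 * δ j / (x + (j:ℝ)) ^ 3 := by
      have hre : ∑ k ∈ Finset.Ioo (0:ℤ) ((J:ℤ)-1), (1:ℝ)/(k:ℝ)^2 =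
          ∑ j ∈ Finset.Ioo (-(J:ℤ)) (-1), (1:ℝ)/((-j-1:ℤ):ℝ)^2 := by
        apply Finset.sum_nbij' (i := fun k => -k-1) (j := fun j => -j-1)
        · intro k hk; simp only [Finset.mem_Ioo] at *; omega
        · intro j hj; simp only [Finset.mem_Ioo] at *; omega
        · intro k _; omega
        · intro j _; omega
        · intro k _; norm_num
      rw [hre, Finset.mul_sum, ← Finset.sum_neg_distrib]
      apply Finset.sum_le_sum
      intro j hj
      simp only [Finset.mem_Ioo] at hj
      have hj2 : (j:ℝ) ≤ -2 := by exact_mod_cast (by omega : j ≤ -2)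
      obtain ⟨u, hu⟩ : ∃ u : ℝ, u = -(x + (j:ℝ)) := ⟨_, rfl⟩
      obtain ⟨m, hm⟩ : ∃ m : ℝ, ((-j-1:ℤ):ℝ) = m := ⟨_, rfl⟩
      rw [hm]
      have hm' : m = -(j:ℝ) - 1 := by rw [← hm]; push_cast; ring
      have hm1 : (1:ℝ) ≤ m := by rw [hm']; linarith
      have hum : m < u := by rw [hu, hm']; linarith
      have hu0 : (0:ℝ) < u := by linarith
      have hxj : x + (j:ℝ) = -u := by rw [hu]; ring
      have he1 : m^3 ≤ u^3 := pow_le_pow_left₀ (by linarith) (by linarith) 3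
      have he2 : m^2 ≤ m^3 := by
        nlinarith [mul_nonneg (sq_nonneg m) (by linarith : (0:ℝ) ≤ m - 1)]
      have hle : m^2 ≤ u^3 := le_trans he2 he1
      have hm2 : (0:ℝ) < m^2 := by positivity
      rcases hδ j with hd | hd
      · rw [hd, hxj]
        have hkey : 2 / u^3 ≤ 2 / m^2 := by gcongr
        have he : 2 * 1 / (-u)^3 = -(2/u^3) := by
          rw [Odd.neg_pow (by decide : Odd 3), mul_one, div_neg]
        rw [he]
        have h2 : 2 * ((1:ℝ)/m^2) = 2/m^2 := by ring
        rw [h2]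
        linarith
      · rw [hd, hxj]
        have he : 2 * (-1) / (-u)^3 = 2/u^3 := by
          rw [Odd.neg_pow (by decide : Odd 3), div_neg]; ring
        rw [he]
        have : (0:ℝ) < 2/u^3 := by positivity
        have h2 : (0:ℝ) ≤ 2 * ((1:ℝ)/m^2) := by positivity
        linarith
    have hsum_bound : -8 ≤ ∑ j ∈ S, 2 * δ j / (x + (j:ℝ)) ^ 3 := by
      rw [hSsplit, Finset.sum_union hdisj]
      have b1 := sum_sq_le (J:ℤ)
      have b2 := sum_sq_le ((J:ℤ)-1)
      linarith
    have hmain : (16:ℝ) ≤ 2 / x^3 + 2 / (1-x)^3 := by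
      have hx1' : (0:ℝ) < 1 - x := by linarith
      rcases le_total x (1/2) with h | h
      · have h1 : (0:ℝ) < x^3 := by positivity
        have hA : (16:ℝ) ≤ 2 / x^3 := by
          have hc : x^3 ≤ (1/2:ℝ)^3 := pow_le_pow_left₀ (le_of_lt hx0) h 3
          rw [le_div_iff₀ h1]; nlinarith
        have hB : (0:ℝ) < 2 / (1-x)^3 := by positivity
        linarith
      · have h1 : (0:ℝ) < (1-x)^3 := by positivity
        have hA : (16:ℝ) ≤ 2 / (1-x)^3 := by
          have hc : (1-x)^3 ≤ (1/2:ℝ)^3 := pow_le_pow_left₀ (le_of_lt hx1') (by linarith) 3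
          rw [le_div_iff₀ h1]; nlinarith
        have hB : (0:ℝ) < 2 / x^3 := by positivity
        linarith
    have : F2 x = 2 / x^3 + 2 / (1-x)^3 + ∑ j ∈ S, 2 * δ j / (x + (j:ℝ)) ^ 3 := rfl
    rw [this]
    linarith
  constructor
  · intro x hx
    rw [hF2eq x hx]
    exact hpos x hx
  · apply strictConvexOn_of_deriv2_pos (convex_Ioo 0 1)
    · exact fun x hx => ((hd1 x hx).differentiableAt.continuousAt).continuousWithinAt
    · intro x hx
      rw [interior_Ioo] at hx
      rw [show deriv^[2] F = iteratedDeriv 2 F from (iteratedDeriv_eq_iterate).symm, hF2eq x hx]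
      exact hpos x hx
end

section
/- Let g(x) = 1/x + 1/(1-x) + Σ_{|j|<J, j≠0,-1} δ_j/(x+j) with δ_j ∈ {-1,1}. If 0 < t < 1/π then g'(t) < 0, and if 1 - 1/π < t < 1 then g'(t) > 0. Hence any critical point x₀ of g in (0,1) lies in [1/π, 1 - 1/π]. -/
open Real Finset

private lemma rrf_mem_S {J : ℕ} {j : ℤ}
    (hj : j ∈ (Finset.Ioo (-(J : ℤ)) J).filter (fun j => j ≠ 0 ∧ j ≠ -1)) :
    1 ≤ j ∨ j ≤ -2 := by
  simp only [Finset.mem_filter, Finset.mem_Ioo] at hj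
  omega

private lemma rrf_ne {J : ℕ} {j : ℤ} {t : ℝ} (ht0 : 0 < t) (ht1 : t < 1)
    (hj : j ∈ (Finset.Ioo (-(J : ℤ)) J).filter (fun j => j ≠ 0 ∧ j ≠ -1)) :
    t + (j : ℝ) ≠ 0 := by
  rcases rrf_mem_S hj with h | h
  · have : (1 : ℝ) ≤ (j : ℝ) := by exact_mod_cast h
    positivity
  · have : (j : ℝ) ≤ -2 := by exact_mod_cast h
    nlinarith

/-- Basel-type bound: each half of the sum is at most `π²/6`. -/
private lemma rrf_sum_bound (J : ℕ) {t : ℝ} (ht0 : 0 < t) (ht1 : t < 1) :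
    ∑ j ∈ (Finset.Ioo (-(J : ℤ)) J).filter (fun j => j ≠ 0 ∧ j ≠ -1),
      1 / (t + (j : ℝ)) ^ 2 ≤ π ^ 2 / 3 := by
  have hsplit : (Finset.Ioo (-(J : ℤ)) J).filter (fun j => j ≠ 0 ∧ j ≠ -1)
      = Finset.Ioo (0 : ℤ) J ∪ Finset.Ioo (-(J : ℤ)) (-1) := by
    ext j
    simp only [Finset.mem_filter, Finset.mem_Ioo, Finset.mem_union]
    omega
  have hdisj : Disjoint (Finset.Ioo (0 : ℤ) J) (Finset.Ioo (-(J : ℤ)) (-1)) := by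
    rw [Finset.disjoint_left]
    intro j hj hj'
    simp only [Finset.mem_Ioo] at hj hj'
    omega
  rw [hsplit, Finset.sum_union hdisj]
  have hpos : ∑ j ∈ Finset.Ioo (0 : ℤ) J, 1 / (t + (j : ℝ)) ^ 2 ≤ π ^ 2 / 6 := by
    have h1 : ∑ j ∈ Finset.Ioo (0 : ℤ) J, 1 / (t + (j : ℝ)) ^ 2
        ≤ ∑ j ∈ Finset.Ioo (0 : ℤ) J, 1 / ((j : ℝ)) ^ 2 := by
      refine Finset.sum_le_sum fun j hj => ?_
      simp only [Finset.mem_Ioo] at hj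
      have hj1 : (1 : ℝ) ≤ (j : ℝ) := by exact_mod_cast hj.1
      have h2 : (j : ℝ) ^ 2 ≤ (t + j) ^ 2 := by nlinarith
      exact one_div_le_one_div_of_le (by nlinarith) h2
    have h2 : Finset.Ioo (0 : ℤ) J
        = (Finset.Ioo 0 J).map ⟨(Nat.cast : ℕ → ℤ), Nat.cast_injective⟩ := by
      ext j
      simp only [Finset.mem_Ioo, Finset.mem_map, Function.Embedding.coeFn_mk]
      constructor
      · intro h
        exact ⟨j.toNat, by omega, by omega⟩
      · rintro ⟨n, hn, rfl⟩
        exact_mod_cast hn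
    refine h1.trans ?_
    rw [h2, Finset.sum_map]
    refine sum_le_hasSum (L := SummationFilter.unconditional ℕ) _ (fun n _ => by positivity) ?_
    simpa using hasSum_zeta_two
  have hneg : ∑ j ∈ Finset.Ioo (-(J : ℤ)) (-1), 1 / (t + (j : ℝ)) ^ 2 ≤ π ^ 2 / 6 := by
    have h1 : ∑ j ∈ Finset.Ioo (-(J : ℤ)) (-1), 1 / (t + (j : ℝ)) ^ 2
        ≤ ∑ j ∈ Finset.Ioo (-(J : ℤ)) (-1), 1 / ((-(j : ℝ)) - 1) ^ 2 := by
      refine Finset.sum_le_sum fun j hj => ?_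
      simp only [Finset.mem_Ioo] at hj
      have hj2' : j ≤ -2 := by omega
      have hj2 : (j : ℝ) ≤ -2 := by exact_mod_cast hj2'
      have h2 : ((-(j : ℝ)) - 1) ^ 2 ≤ (t + j) ^ 2 := by nlinarith
      exact one_div_le_one_div_of_le (by nlinarith) h2
    have h2 : Finset.Ioo (-(J : ℤ)) (-1)
        = (Finset.Ioo 0 (J - 1)).map
          ⟨fun n : ℕ => -(n : ℤ) - 1,
            show Function.Injective (fun n : ℕ => -(n : ℤ) - 1) from fun a b h => by dsimp only at h; omega⟩ := by
      ext j
      simp only [Finset.mem_Ioo, Finset.mem_map, Function.Embedding.coeFn_mk]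
      constructor
      · intro h
        exact ⟨(-j - 1).toNat, by omega, by omega⟩
      · rintro ⟨n, hn, rfl⟩
        omega
    refine h1.trans ?_
    rw [h2, Finset.sum_map]
    have heq : ∀ n : ℕ, 1 / ((-((-(n : ℤ) - 1 : ℤ) : ℝ)) - 1) ^ 2 = 1 / ((n : ℝ)) ^ 2 := by
      intro n
      push_cast
      ring_nf
    simp only [Function.Embedding.coeFn_mk, heq]
    refine sum_le_hasSum _ (fun n _ => by positivity) hasSum_zeta_two
  linarith

/-- The derivative of `g` at a point of `(0,1)`. -/
private lemma rrf_hasDerivAt (J : ℕ) (δ : ℤ → ℝ) {t : ℝ} (ht0 : 0 < t) (ht1 : t < 1) :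
    HasDerivAt (fun x : ℝ => 1 / x + 1 / (1 - x) +
        ∑ j ∈ (Finset.Ioo (-(J : ℤ)) J).filter (fun j => j ≠ 0 ∧ j ≠ -1), δ j / (x + j))
      (-(1 / t ^ 2) + 1 / (1 - t) ^ 2 +
        ∑ j ∈ (Finset.Ioo (-(J : ℤ)) J).filter (fun j => j ≠ 0 ∧ j ≠ -1),
          -(δ j) / (t + (j : ℝ)) ^ 2) t := by
  have h1 : HasDerivAt (fun x : ℝ => 1 / x) (-(1 / t ^ 2)) t := by
    simpa only [one_div] using hasDerivAt_inv ht0.ne'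
  have h2 : HasDerivAt (fun x : ℝ => 1 / (1 - x)) (1 / (1 - t) ^ 2) t := by
    have hne : (1 : ℝ) - t ≠ 0 := by linarith
    have h := ((hasDerivAt_id t).const_sub 1).inv hne
    simp only [id_eq] at h
    have he : - (-1 : ℝ) / (1 - t) ^ 2 = 1 / (1 - t) ^ 2 := by ring
    rw [he] at h
    simpa only [one_div, Pi.inv_def] using h
  have h3 : HasDerivAt
      (fun x : ℝ => ∑ j ∈ (Finset.Ioo (-(J : ℤ)) J).filter (fun j => j ≠ 0 ∧ j ≠ -1),
        δ j / (x + j))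
      (∑ j ∈ (Finset.Ioo (-(J : ℤ)) J).filter (fun j => j ≠ 0 ∧ j ≠ -1),
        -(δ j) / (t + (j : ℝ)) ^ 2) t := by
    refine HasDerivAt.fun_sum fun j hj => ?_
    have hne : t + (j : ℝ) ≠ 0 := rrf_ne ht0 ht1 hj
    have h4 : HasDerivAt (fun x : ℝ => (x + (j : ℝ))⁻¹) (-1 / (t + j) ^ 2) t := by
      have h := ((hasDerivAt_id t).add_const (j : ℝ)).inv hne
      simpa only [id_eq, Pi.inv_def] using h
    have h5 := h4.const_mul (δ j)
    have heq : (fun x : ℝ => δ j * (x + (j : ℝ))⁻¹) = fun x : ℝ => δ j / (x + j) := by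
      funext x; rw [div_eq_mul_inv]
    rw [heq] at h5
    have he : δ j * (-1 / (t + (j : ℝ)) ^ 2) = -(δ j) / (t + (j : ℝ)) ^ 2 := by ring
    rw [he] at h5
    exact h5
  exact (h1.add h2).add h3

/-- With `g(x) = 1/x + 1/(1-x) + Σ_{|j|<J, j≠0,-1} δ_j/(x+j)`, `δ_j ∈ {±1}`:
`g' < 0` on `(0, 1/π)`, `g' > 0` on `(1 - 1/π, 1)`, hence any critical point of `g`
in `(0,1)` lies in `[1/π, 1 - 1/π]`. -/
theorem random_rational_fn_critical_point (J : ℕ) (hJ : 2 ≤ J) (δ : ℤ → ℝ)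
    (hδ : ∀ j : ℤ, δ j = 1 ∨ δ j = -1) :
    let g : ℝ → ℝ := fun x => 1 / x + 1 / (1 - x) +
      ∑ j ∈ (Finset.Ioo (-(J : ℤ)) J).filter (fun j => j ≠ 0 ∧ j ≠ -1), δ j / (x + j)
    (∀ t : ℝ, 0 < t → t < 1 / Real.pi → deriv g t < 0) ∧
    (∀ t : ℝ, 1 - 1 / Real.pi < t → t < 1 → 0 < deriv g t) ∧
    (∀ x₀ ∈ Set.Ioo (0 : ℝ) 1, deriv g x₀ = 0 →
      x₀ ∈ Set.Icc (1 / Real.pi) (1 - 1 / Real.pi)) := by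
  intro g
  have hπ : (3.141592 : ℝ) < π := Real.pi_gt_d6
  have hπ' : π < 3.15 := by linarith [Real.pi_lt_d2]
  have hπ1 : (1 : ℝ) / π < 1 / 2 := by
    rw [div_lt_div_iff₀ Real.pi_pos (by norm_num)]
    linarith
  have hπ0 : (0 : ℝ) < 1 / π := by positivity
  -- the key numeric inequality: 1/(1-1/π)² + π²/3 ≤ π²
  have hkey : 1 / (1 - 1 / π) ^ 2 + π ^ 2 / 3 ≤ π ^ 2 := by
    have hp : (0 : ℝ) < π := Real.pi_pos
    have h1 : 1 / (1 - 1 / π) ^ 2 = π ^ 2 / (π - 1) ^ 2 := by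
      rw [div_eq_div_iff (by nlinarith) (by nlinarith)]
      field_simp
    rw [h1]
    rw [div_add_div _ _ (by nlinarith : ((π : ℝ) - 1) ^ 2 ≠ 0) (by norm_num : (3 : ℝ) ≠ 0),
      div_le_iff₀ (by nlinarith)]
    nlinarith
  -- termwise bounds on the δ-sum
  have hsum_bound : ∀ t : ℝ, 0 < t → t < 1 →
      |∑ j ∈ (Finset.Ioo (-(J : ℤ)) J).filter (fun j => j ≠ 0 ∧ j ≠ -1),
        -(δ j) / (t + (j : ℝ)) ^ 2| ≤ π ^ 2 / 3 := by
    intro t ht0 ht1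
    refine (Finset.abs_sum_le_sum_abs _ _).trans ?_
    refine le_trans (Finset.sum_le_sum fun j hj => ?_) (rrf_sum_bound J ht0 ht1)
    have hne : t + (j : ℝ) ≠ 0 := rrf_ne ht0 ht1 hj
    have hpos : (0 : ℝ) < (t + (j : ℝ)) ^ 2 := by positivity
    rw [abs_div, abs_neg, abs_of_pos hpos]
    rcases hδ j with h | h <;> rw [h] <;> norm_num
  have hc1 : ∀ t : ℝ, 0 < t → t < 1 / Real.pi → deriv g t < 0 := by
    intro t ht0 htπ
    have ht1 : t < 1 := by linarith
    have hd := (rrf_hasDerivAt J δ ht0 ht1).deriv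
    rw [hd]
    have hb := hsum_bound t ht0 ht1
    have hq : (0 : ℝ) < 1 - 1 / π := by linarith
    have h1 : π ^ 2 < 1 / t ^ 2 := by
      have h := one_div_lt_one_div_of_lt ht0 htπ
      rw [one_div_one_div] at h
      calc π ^ 2 < (1 / t) ^ 2 := pow_lt_pow_left₀ h Real.pi_pos.le (by norm_num)
        _ = 1 / t ^ 2 := by rw [div_pow, one_pow]
    have h2 : 1 / (1 - t) ^ 2 ≤ 1 / (1 - 1 / π) ^ 2 := by
      refine one_div_le_one_div_of_le (by positivity) ?_
      exact pow_le_pow_left₀ hq.le (by linarith) 2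
    have habs := abs_le.mp hb
    linarith [habs.2]
  have hc2 : ∀ t : ℝ, 1 - 1 / Real.pi < t → t < 1 → 0 < deriv g t := by
    intro t htπ ht1
    have ht0 : 0 < t := by linarith
    have hd := (rrf_hasDerivAt J δ ht0 ht1).deriv
    rw [hd]
    have hb := hsum_bound t ht0 ht1
    have hq : (0 : ℝ) < 1 - 1 / π := by linarith
    have h1 : π ^ 2 < 1 / (1 - t) ^ 2 := by
      have hu0 : (0 : ℝ) < 1 - t := by linarith
      have huπ : 1 - t < 1 / π := by linarith
      have h := one_div_lt_one_div_of_lt hu0 huπ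
      rw [one_div_one_div] at h
      calc π ^ 2 < (1 / (1 - t)) ^ 2 := pow_lt_pow_left₀ h Real.pi_pos.le (by norm_num)
        _ = 1 / (1 - t) ^ 2 := by rw [div_pow, one_pow]
    have h2 : 1 / t ^ 2 ≤ 1 / (1 - 1 / π) ^ 2 := by
      refine one_div_le_one_div_of_le (by positivity) ?_
      exact pow_le_pow_left₀ hq.le (by linarith) 2
    have habs := abs_le.mp hb
    linarith [habs.1]
  refine ⟨hc1, hc2, fun x₀ hx₀ hderiv => ?_⟩
  constructor
  · by_contra h
    push_neg at h
    have := hc1 x₀ hx₀.1 h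
    linarith
  · by_contra h
    push_neg at h
    have := hc2 x₀ h hx₀.2
    linarith
end
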